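/- For every finite simple graph G, the unitary capacity is at least the reversible capacity: Θ_U(G) ≥ Θ_REV(G). -/

import Mathlib

open Filter

/-- A language `L` over the vertices of `G` is distinguishable if any two distinct
equal-length words differ at some position by two non-adjacent, non-equal symbols. -/
def Distinguishable {V : Type*} (G : SimpleGraph V) (L : Set (List V)) : Prop :=
  ∀ x ∈ L, ∀ y ∈ L, x.length = y.length → x ≠ y →
    ∃ (i : ℕ) (hx : i < x.length) (hy : i < y.length),
      x.get ⟨i, hx⟩ ≠ y.get ⟨i, hy⟩ ∧ ¬ G.Adj (x.get ⟨i, hx⟩) (y.get ⟨i, hy⟩)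

/-- The growth rate of a language: `limsup |L(n)|^(1/n)`. -/
noncomputable def growthRate {V : Type*} (L : Set (List V)) : ℝ :=
  Filter.limsup (fun n : ℕ =>
    ((Set.ncard {w ∈ L | w.length = n} : ℕ) : ℝ) ^ (1 / (n : ℝ))) Filter.atTop

/-- The `n`-fold strong graph product of `G` with itself. -/
def strongPow {V : Type*} (G : SimpleGraph V) (n : ℕ) : SimpleGraph (Fin n → V) where
  Adj x y := x ≠ y ∧ ∀ i, x i = y i ∨ G.Adj (x i) (y i)
  symm := by
    refine ⟨?_⟩
    rintro x y ⟨hne, h⟩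
    exact ⟨hne.symm, fun i => (h i).imp Eq.symm (fun h' => h'.symm)⟩
  loopless := by refine ⟨?_⟩; rintro x ⟨hne, _⟩; exact hne rfl

/-- The independence number of a graph. -/
noncomputable def indepNum {V : Type*} (G : SimpleGraph V) : ℕ :=
  sSup {k | ∃ s : Set V, (s.Pairwise fun a b => ¬ G.Adj a b) ∧ s.ncard = k}

/-- The Shannon (zero-error) capacity `Θ(G) = sup_n α(G^{⊠n})^{1/n}`. -/
noncomputable def shannonCapacity {V : Type*} (G : SimpleGraph V) : ℝ :=
  ⨆ n : ℕ, ((indepNum (strongPow G (n + 1)) : ℝ)) ^ (1 / ((n : ℝ) + 1))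

/-- A reversible partial DFA: each symbol's partial transition function is injective
on its domain. -/
structure RevPartialDFA (α : Type*) where
  /-- the (finite) state space -/
  σ : Type
  /-- the state space is finite -/
  fintype : Fintype σ
  /-- partial transition function -/
  step : σ → α → Option σ
  /-- initial state -/
  start : σ
  /-- accepting states -/
  accept : Set σ
  /-- reversibility: transitions by a fixed symbol are injective where defined -/
  reversible : ∀ (a : α) (x y q : σ), step x a = some q → step y a = some q → x = y

/-- The partial evaluation of a reversible partial DFA on a word (`none` if any
transition along the word is undefined). -/
def RevPartialDFA.eval {α : Type*} (M : RevPartialDFA α) (w : List α) : Option M.σ :=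
  w.foldl (fun os a => os.bind fun s => M.step s a) (some M.start)

/-- The language accepted by a reversible partial DFA: all transitions defined and the
final state accepting. -/
def RevPartialDFA.accepts {α : Type*} (M : RevPartialDFA α) : Set (List α) :=
  {w | ∃ s ∈ M.accept, M.eval w = some s}

/-- The reversible capacity `Θ_REV(G)`: the supremum of growth rates over reversible
partial DFAs whose accepted language is distinguishable for `G`. -/
noncomputable def revCapacity {V : Type*} (G : SimpleGraph V) : ℝ :=
  sSup {r : ℝ |
    ∃ M : RevPartialDFA V, Distinguishable G M.accepts ∧ growthRate M.accepts = r}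

/-- A Kondacs–Watrous quantum finite automaton over alphabet `α`. -/
structure KWQFA (α : Type*) where
  /-- dimension of the Hilbert space -/
  d : ℕ
  /-- unitary transition matrix for each symbol -/
  U : α → Matrix (Fin d) (Fin d) ℂ
  unitary : ∀ a, U a ∈ Matrix.unitaryGroup (Fin d) ℂ
  /-- initial state -/
  init : Fin d → ℂ
  init_norm : ∑ i, Complex.normSq (init i) = 1
  /-- accepting projection -/
  A : Matrix (Fin d) (Fin d) ℂ
  /-- rejecting projection -/
  R : Matrix (Fin d) (Fin d) ℂ
  A_idem : A * A = A
  A_herm : A.IsHermitian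
  R_idem : R * R = R
  R_herm : R.IsHermitian
  AR : A * R = 0

namespace KWQFA

variable {α : Type*} (M : KWQFA α)

/-- The nonhalting projection `N = I − A − R`. -/
noncomputable def N : Matrix (Fin M.d) (Fin M.d) ℂ := 1 - M.A - M.R

/-- The accepting component of the state after reading a word:
`A (U_{s_n} N) ⋯ (U_{s_1} N) |init⟩` (first symbol applied first). -/
noncomputable def acceptVec (w : List α) : Fin M.d → ℂ :=
  M.A.mulVec (w.foldl (fun v a => (M.U a * M.N).mulVec v) M.init)

/-- The set of strings accepted with nonzero probability. -/
def accepts : Set (List α) := {w | M.acceptVec w ≠ 0}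

/-- The capacity of the automaton: growth of total acceptance probability, counting
strings weighted by their acceptance probability. -/
noncomputable def capacity [Fintype α] : ℝ :=
  Filter.limsup (fun n : ℕ =>
    (∑ w : Fin n → α, ∑ i, Complex.normSq (M.acceptVec (List.ofFn w) i)) ^ (1 / (n : ℝ)))
    Filter.atTop

end KWQFA

/-- The unitary capacity `Θ_U(G)`: the supremum of the capacities of Kondacs–Watrous
quantum finite automata whose accepted language is distinguishable for `G`. -/
noncomputable def unitaryCapacity {V : Type*} [Fintype V] (G : SimpleGraph V) : ℝ :=
  sSup {r : ℝ | ∃ M : KWQFA V, Distinguishable G M.accepts ∧ M.capacity = r}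


open Matrix Complex Filter

section NormLemmas
variable {ι : Type*} [Fintype ι] [DecidableEq ι]

noncomputable def nsqC (v : ι → ℂ) : ℝ := ∑ i, Complex.normSq (v i)

lemma nsqC_nonneg (v : ι → ℂ) : 0 ≤ nsqC v :=
  Finset.sum_nonneg fun _ _ => Complex.normSq_nonneg _

lemma nsqC_eq_re (v : ι → ℂ) : nsqC v = (star v ⬝ᵥ v).re := by
  simp only [dotProduct, Pi.star_apply, Complex.re_sum, nsqC]
  refine Finset.sum_congr rfl fun i _ => ?_
  rw [RCLike.star_def, mul_comm, Complex.mul_conj]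
  simp

lemma key_dot (S : Matrix ι ι ℂ) (v : ι → ℂ) :
    star (S *ᵥ v) ⬝ᵥ (S *ᵥ v) = (star v ᵥ* (Sᴴ * S)) ⬝ᵥ v := by
  rw [star_mulVec, dotProduct_mulVec, vecMul_vecMul]

lemma nsqC_unitary_mulVec {U : Matrix ι ι ℂ} (hU : U ∈ Matrix.unitaryGroup ι ℂ)
    (v : ι → ℂ) : nsqC (U *ᵥ v) = nsqC v := by
  rw [nsqC_eq_re, nsqC_eq_re, key_dot]
  have : Uᴴ * U = 1 := (Matrix.mem_unitaryGroup_iff'.mp hU)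
  rw [this, Matrix.vecMul_one]

lemma nsqC_proj_mulVec_le {P : Matrix ι ι ℂ} (hP : P * P = P) (hH : P.IsHermitian)
    (v : ι → ℂ) : nsqC (P *ᵥ v) ≤ nsqC v := by
  set Q : Matrix ι ι ℂ := 1 - P with hQdef
  have hQH : Q.IsHermitian := by
    unfold Matrix.IsHermitian
    rw [hQdef, Matrix.conjTranspose_sub, Matrix.conjTranspose_one, hH]
  have hQ : Q * Q = Q := by
    simp only [hQdef, sub_mul, mul_sub, one_mul, mul_one, hP]; abel
  have e1 : nsqC (P *ᵥ v) = ((star v ᵥ* P) ⬝ᵥ v).re := by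
    rw [nsqC_eq_re, key_dot, hH.eq, hP]
  have e2 : nsqC (Q *ᵥ v) = ((star v ᵥ* Q) ⬝ᵥ v).re := by
    rw [nsqC_eq_re, key_dot, hQH.eq, hQ]
  have e3 : nsqC (P *ᵥ v) + nsqC (Q *ᵥ v) = nsqC v := by
    rw [e1, e2, nsqC_eq_re, ← Complex.add_re, ← add_dotProduct, ← Matrix.vecMul_add]
    have : P + Q = 1 := by rw [hQdef]; abel
    rw [this, Matrix.vecMul_one]
  nlinarith [nsqC_nonneg (Q *ᵥ v)]

end NormLemmas
namespace KWQFA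
variable {α : Type*} (M : KWQFA α)

lemma N_herm : M.N.IsHermitian := by
  unfold Matrix.IsHermitian N
  rw [Matrix.conjTranspose_sub, Matrix.conjTranspose_sub, Matrix.conjTranspose_one,
    M.A_herm.eq, M.R_herm.eq]

lemma RA : M.R * M.A = 0 := by
  have := congrArg Matrix.conjTranspose M.AR
  rwa [Matrix.conjTranspose_mul, M.A_herm.eq, M.R_herm.eq, Matrix.conjTranspose_zero] at this

lemma N_idem : M.N * M.N = M.N := by
  unfold N
  simp only [sub_mul, mul_sub, one_mul, mul_one, M.A_idem, M.R_idem, M.AR, M.RA]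
  abel

lemma nsqC_fold_le_aux (w : List α) (v : Fin M.d → ℂ) (hv : nsqC v ≤ 1) :
    nsqC (w.foldl (fun v a => (M.U a * M.N).mulVec v) v) ≤ 1 := by
  induction w generalizing v with
  | nil => exact hv
  | cons a w ih =>
      simp only [List.foldl_cons]
      refine ih _ ?_
      rw [← Matrix.mulVec_mulVec, nsqC_unitary_mulVec (M.unitary a)]
      exact le_trans (nsqC_proj_mulVec_le M.N_idem M.N_herm v) hv

lemma prob_le_one (w : List α) : ∑ i, Complex.normSq (M.acceptVec w i) ≤ 1 := by
  have h1 : nsqC (M.acceptVec w) ≤ 1 := by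
    unfold acceptVec
    exact le_trans (nsqC_proj_mulVec_le M.A_idem M.A_herm _)
      (M.nsqC_fold_le_aux w M.init (le_of_eq M.init_norm))
  exact h1

end KWQFA
namespace KWQFA

lemma term_le {α : Type*} [Fintype α] (M : KWQFA α) :
    ∀ n : ℕ,
      (∑ w : Fin n → α, ∑ i, Complex.normSq (M.acceptVec (List.ofFn w) i)) ^ (1 / (n : ℝ))
        ≤ max 1 (Fintype.card α : ℝ) := by
    intro n
    rcases Nat.eq_zero_or_pos n with hn | hn
    · subst hn
      simp only [Nat.cast_zero, div_zero, Real.rpow_zero]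
      exact le_max_left _ _
    · have hsum : (∑ w : Fin n → α, ∑ i, Complex.normSq (M.acceptVec (List.ofFn w) i))
          ≤ ((Fintype.card α : ℝ)) ^ (n : ℕ) := by
        calc (∑ w : Fin n → α, ∑ i, Complex.normSq (M.acceptVec (List.ofFn w) i))
            ≤ ∑ _w : Fin n → α, (1 : ℝ) :=
              Finset.sum_le_sum fun w _ => M.prob_le_one (List.ofFn w)
          _ = (Fintype.card (Fin n → α) : ℝ) := by simp
          _ = ((Fintype.card α : ℝ)) ^ (n : ℕ) := by
              rw [Fintype.card_fun]; push_cast; simp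
      have h0 : (0:ℝ) ≤ ∑ w : Fin n → α, ∑ i, Complex.normSq (M.acceptVec (List.ofFn w) i) :=
        Finset.sum_nonneg fun _ _ => Finset.sum_nonneg fun _ _ => Complex.normSq_nonneg _
      refine le_trans (Real.rpow_le_rpow h0 hsum (by positivity)) ?_
      have hcard : (0:ℝ) ≤ (Fintype.card α : ℝ) := Nat.cast_nonneg _
      have : (((Fintype.card α : ℝ)) ^ (n:ℕ)) ^ (1 / (n:ℝ)) = (Fintype.card α : ℝ) := by
        rw [← Real.rpow_natCast ((Fintype.card α : ℝ)) n, ← Real.rpow_mul hcard]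
        rw [mul_one_div, div_self (by exact_mod_cast hn.ne'), Real.rpow_one]
      rw [this]
      exact le_max_right _ _

lemma capacity_le_max {α : Type*} [Fintype α] (M : KWQFA α) :
    M.capacity ≤ max 1 (Fintype.card α : ℝ) := by
  unfold capacity
  have hterm := M.term_le
  apply Filter.limsup_le_of_le
  · exact Filter.isCoboundedUnder_le_of_le (l := (Filter.atTop : Filter ℕ)) (x := 0)
      (fun n => Real.rpow_nonneg (Finset.sum_nonneg fun _ _ =>
        Finset.sum_nonneg fun _ _ => Complex.normSq_nonneg _) _)
  · exact Filter.Eventually.of_forall hterm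

/-- The trivial automaton that accepts nothing. -/
noncomputable def trivialQFA (α : Type*) : KWQFA α where
  d := 1
  U := fun _ => 1
  unitary := fun _ => by simp [Matrix.mem_unitaryGroup_iff]
  init := fun _ => 1
  init_norm := by simp
  A := 0
  R := 1
  A_idem := by simp
  A_herm := Matrix.isHermitian_zero
  R_idem := by simp
  R_herm := Matrix.isHermitian_one
  AR := by simp

lemma trivialQFA_acceptVec (α : Type*) (w : List α) : (trivialQFA α).acceptVec w = 0 := by
  unfold acceptVec
  exact Matrix.zero_mulVec _

lemma trivialQFA_accepts (α : Type*) : (trivialQFA α).accepts = ∅ := by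
  ext w; simp [accepts, trivialQFA_acceptVec]

lemma trivialQFA_capacity (α : Type*) [Fintype α] : (trivialQFA α).capacity = 0 := by
  unfold capacity
  have h : (fun n : ℕ =>
      (∑ w : Fin n → α, ∑ i, Complex.normSq ((trivialQFA α).acceptVec (List.ofFn w) i))
        ^ (1 / (n : ℝ))) =ᶠ[Filter.atTop] (fun _ => (0:ℝ)) := by
    filter_upwards [Filter.eventually_gt_atTop 0] with n hn
    have : (∑ w : Fin n → α, ∑ i, Complex.normSq ((trivialQFA α).acceptVec (List.ofFn w) i))
        = 0 := by simp [trivialQFA_acceptVec]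
    rw [this]
    exact Real.zero_rpow (by positivity)
  rw [Filter.limsup_congr h, Filter.limsup_const]

end KWQFA

lemma distinguishable_mono {V : Type*} {G : SimpleGraph V} {L L' : Set (List V)}
    (h : L' ⊆ L) (hL : Distinguishable G L) : Distinguishable G L' :=
  fun x hx y hy => hL x (h hx) y (h hy)

lemma bddAbove_unitarySet {V : Type*} [Fintype V] (G : SimpleGraph V) :
    BddAbove {r : ℝ | ∃ M : KWQFA V, Distinguishable G M.accepts ∧ M.capacity = r} := by
  refine ⟨max 1 (Fintype.card V : ℝ), ?_⟩
  rintro r ⟨M, _, rfl⟩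
  exact M.capacity_le_max

lemma zero_mem_unitarySet {V : Type*} [Fintype V] (G : SimpleGraph V) :
    (0:ℝ) ∈ {r : ℝ | ∃ M : KWQFA V, Distinguishable G M.accepts ∧ M.capacity = r} := by
  refine ⟨KWQFA.trivialQFA V, ?_, KWQFA.trivialQFA_capacity V⟩
  rw [KWQFA.trivialQFA_accepts]
  intro x hx
  exact absurd hx (Set.notMem_empty x)

lemma unitaryCapacity_nonneg {V : Type*} [Fintype V] (G : SimpleGraph V) :
    0 ≤ unitaryCapacity G :=
  le_csSup (bddAbove_unitarySet G) (zero_mem_unitarySet G)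
namespace RevSim

open Matrix

attribute [local instance] RevPartialDFA.fintype
attribute [local instance] Classical.propDecidable

variable {V : Type*} (M : RevPartialDFA V)

/-- The basis set of the simulating QFA: two copies (live/dead) of the DFA states,
times a qubit. -/
abbrev B := (M.σ ⊕ M.σ) × Bool

/-- The permutation underlying the unitary for symbol `a`. -/
noncomputable def g (a : V) (x : M.σ ⊕ M.σ) : M.σ ⊕ M.σ :=
  Sum.elim (fun t => (M.step t a).elim (Sum.inr t) Sum.inl)
    (fun t => if h : ∃ u, M.step u a = some t then Sum.inr h.choose else Sum.inl t) x

lemma g_inl (a : V) (t : M.σ) : g M a (Sum.inl t) = (M.step t a).elim (Sum.inr t) Sum.inl := rfl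

lemma g_inj (a : V) : Function.Injective (g M a) := by
  have mixed : ∀ t u, g M a (Sum.inl t) = g M a (Sum.inr u) → False := by
    intro t u hxy
    rcases h1 : M.step t a with _ | t' <;> by_cases h2 : ∃ v, M.step v a = some u <;>
        simp only [g, Sum.elim_inl, Sum.elim_inr, h1, h2, Option.elim_none, Option.elim_some,
          dif_pos, dif_neg, not_false_iff] at hxy
    · have e2 := h2.choose_spec
      rw [← Sum.inr.inj hxy] at e2
      rw [h1] at e2
      exact nomatch e2
    · exact absurd hxy (by simp)
    · exact absurd hxy (by simp)
    · exact h2 ⟨t, (Sum.inl.inj hxy) ▸ h1⟩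
  intro x y hxy
  cases x with
  | inl t =>
    cases y with
    | inl u =>
      rcases h1 : M.step t a with _ | t' <;> rcases h2 : M.step u a with _ | u' <;>
          simp only [g, Sum.elim_inl, h1, h2, Option.elim_none, Option.elim_some] at hxy
      · exact congrArg Sum.inl (Sum.inr.inj hxy)
      · exact absurd hxy (by simp)
      · exact absurd hxy (by simp)
      · exact congrArg Sum.inl (M.reversible a t u u' ((Sum.inl.inj hxy) ▸ h1) h2)
    | inr u => exact absurd hxy (fun h => mixed t u h)
  | inr t =>
    cases y with
    | inl u => exact absurd hxy.symm (fun h => mixed u t h)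
    | inr u =>
      by_cases h1 : ∃ v, M.step v a = some t <;> by_cases h2 : ∃ v, M.step v a = some u <;>
          simp only [g, Sum.elim_inr, h1, h2, dif_pos, dif_neg, not_false_iff] at hxy
      · have e1 := h1.choose_spec
        have e2 := h2.choose_spec
        rw [Sum.inr.inj hxy, e2] at e1
        exact congrArg Sum.inr (Option.some.inj e1).symm
      · exact absurd hxy (by simp)
      · exact absurd hxy (by simp)
      · exact congrArg Sum.inr (Sum.inl.inj hxy)

end RevSim
namespace RevSim
open Matrix
attribute [local instance] RevPartialDFA.fintype
attribute [local instance] Classical.propDecidable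
variable {V : Type*} (M : RevPartialDFA V)

/-- Rotation entries. -/
noncomputable def rot (c s : ℝ) : Bool → Bool → ℝ
  | false, false => c
  | true, false => s
  | false, true => -s
  | true, true => c

variable (c s : ℝ)

/-- Transition unitaries. -/
noncomputable def Umat (a : V) : Matrix (B M) (B M) ℂ :=
  Matrix.of fun i j => (if i.1 = g M a j.1 then 1 else 0) * ((rot c s i.2 j.2 : ℝ) : ℂ)

/-- Predicate for accepting basis states. -/
def accP (b : B M) : Prop := (∃ t ∈ M.accept, b.1 = Sum.inl t) ∧ b.2 = true

/-- Predicate for non-halting basis states. -/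
def nhP (b : B M) : Prop := (∃ t, b.1 = Sum.inl t) ∧ b.2 = false

noncomputable def Amat : Matrix (B M) (B M) ℂ :=
  Matrix.diagonal fun b => if accP M b then 1 else 0

noncomputable def Rmat : Matrix (B M) (B M) ℂ :=
  Matrix.diagonal fun b => if accP M b ∨ nhP M b then 0 else 1

noncomputable def Nmat : Matrix (B M) (B M) ℂ :=
  Matrix.diagonal fun b => if nhP M b then 1 else 0

lemma N_eq : (1 : Matrix (B M) (B M) ℂ) - Amat M - Rmat M = Nmat M := by
  unfold Amat Rmat Nmat
  rw [← Matrix.diagonal_one, Matrix.diagonal_sub, Matrix.diagonal_sub]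
  apply congrArg Matrix.diagonal
  funext b
  have hx : ¬ (accP M b ∧ nhP M b) := by
    rintro ⟨⟨-, h1⟩, ⟨-, h2⟩⟩; rw [h1] at h2; exact Bool.noConfusion h2
  by_cases h1 : accP M b <;> by_cases h2 : nhP M b
  · exact absurd ⟨h1, h2⟩ hx
  · rw [if_pos h1, if_neg h2, if_pos (Or.inl h1)]; ring
  · rw [if_neg h1, if_pos h2, if_pos (Or.inr h2)]; ring
  · rw [if_neg h1, if_neg h2, if_neg (by tauto)]; ring

/-- Basic two-coordinate vectors. -/
noncomputable def vec (x : M.σ ⊕ M.σ) (α β : ℂ) : B M → ℂ :=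
  fun b => if b = (x, false) then α else if b = (x, true) then β else 0

lemma vec_zero_right (x : M.σ ⊕ M.σ) (α : ℂ) :
    vec M x α 0 = fun b => if b = (x, false) then α else 0 := by
  funext b
  unfold vec
  by_cases h1 : b = (x, false) <;> by_cases h2 : b = (x, true) <;> simp [h1, h2]

lemma vec_nsq (x : M.σ ⊕ M.σ) (α β : ℂ) :
    ∑ b, Complex.normSq (vec M x α β b) = Complex.normSq α + Complex.normSq β := by
  have hne : (x, false) ≠ (x, true) := by simp
  have : ∀ b, Complex.normSq (vec M x α β b)
      = (if b = (x, false) then Complex.normSq α else 0)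
        + (if b = (x, true) then Complex.normSq β else 0) := by
    intro b
    unfold vec
    by_cases h1 : b = (x, false) <;> by_cases h2 : b = (x, true) <;> simp_all
  rw [Finset.sum_congr rfl fun b _ => this b, Finset.sum_add_distrib,
    Finset.sum_ite_eq' Finset.univ ((x, false)) (fun _ => Complex.normSq α),
    Finset.sum_ite_eq' Finset.univ ((x, true)) (fun _ => Complex.normSq β)]
  simp

lemma Nmat_mulVec_inl (t : M.σ) (α β : ℂ) :
    Nmat M *ᵥ vec M (Sum.inl t) α β = vec M (Sum.inl t) α 0 := by
  funext b
  unfold Nmat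
  rw [Matrix.mulVec_diagonal]
  unfold vec
  by_cases h1 : b = (Sum.inl t, false) <;> by_cases h2 : b = (Sum.inl t, true) <;>
    simp_all [nhP]

lemma Nmat_mulVec_inr (t : M.σ) (α β : ℂ) :
    Nmat M *ᵥ vec M (Sum.inr t) α β = 0 := by
  funext b
  unfold Nmat
  rw [Matrix.mulVec_diagonal]
  unfold vec
  by_cases h1 : b = (Sum.inr t, false) <;> by_cases h2 : b = (Sum.inr t, true) <;>
    simp_all [nhP]

lemma Amat_mulVec_inl_acc (t : M.σ) (ht : t ∈ M.accept) (α β : ℂ) :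
    Amat M *ᵥ vec M (Sum.inl t) α β = vec M (Sum.inl t) 0 β := by
  funext b
  unfold Amat
  rw [Matrix.mulVec_diagonal]
  unfold vec
  by_cases h1 : b = (Sum.inl t, false) <;> by_cases h2 : b = (Sum.inl t, true) <;>
    simp_all [accP]

lemma Amat_mulVec_inl_nonacc (t : M.σ) (ht : t ∉ M.accept) (α β : ℂ) :
    Amat M *ᵥ vec M (Sum.inl t) α β = 0 := by
  funext b
  unfold Amat
  rw [Matrix.mulVec_diagonal]
  unfold vec
  by_cases h1 : b = (Sum.inl t, false) <;> by_cases h2 : b = (Sum.inl t, true) <;>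
    simp_all [accP]

lemma Amat_mulVec_inr (t : M.σ) (α β : ℂ) :
    Amat M *ᵥ vec M (Sum.inr t) α β = 0 := by
  funext b
  unfold Amat
  rw [Matrix.mulVec_diagonal]
  unfold vec
  by_cases h1 : b = (Sum.inr t, false) <;> by_cases h2 : b = (Sum.inr t, true) <;>
    simp_all [accP]

lemma Umat_mulVec (a : V) (x : M.σ ⊕ M.σ) (α : ℂ) :
    Umat M c s a *ᵥ vec M x α 0 = vec M (g M a x) ((c : ℂ) * α) ((s : ℂ) * α) := by
  funext i
  rw [vec_zero_right]
  show ∑ j, (Umat M c s a) i j * (if j = (x, false) then α else 0) = _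
  have : ∀ j : B M, (Umat M c s a) i j * (if j = (x, false) then α else 0)
      = if j = (x, false) then (Umat M c s a) i j * α else 0 := by
    intro j; by_cases h : j = (x, false) <;> simp [h]
  rw [Finset.sum_congr rfl fun j _ => this j,
    Finset.sum_ite_eq' Finset.univ ((x, false)) (fun j => (Umat M c s a) i j * α)]
  simp only [Finset.mem_univ, if_true]
  obtain ⟨y, b2⟩ := i
  unfold Umat vec
  by_cases hy : y = g M a x <;> cases b2 <;> simp [hy, rot] <;> ring

end RevSim
namespace RevSim
open Matrix
attribute [local instance] RevPartialDFA.fintype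
attribute [local instance] Classical.propDecidable
variable {V : Type*} (M : RevPartialDFA V) (c s : ℝ)

lemma Umat_unitary (hcs : c ^ 2 + s ^ 2 = 1) (a : V) :
    Umat M c s a ∈ Matrix.unitaryGroup (B M) ℂ := by
  rw [Matrix.mem_unitaryGroup_iff']
  ext i j
  rw [Matrix.mul_apply]
  have hstep : ∀ k : B M, (star (Umat M c s a)) i k * (Umat M c s a) k j
      = ((if k.1 = g M a i.1 then 1 else 0) * (if k.1 = g M a j.1 then 1 else 0))
        * (((rot c s k.2 i.2 * rot c s k.2 j.2 : ℝ)) : ℂ) := by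
    intro k
    rw [Matrix.star_apply]
    unfold Umat
    simp only [Matrix.of_apply]
    rw [star_mul']
    push_cast
    rw [Complex.star_def, Complex.conj_ofReal]
    simp only [apply_ite (starRingEnd ℂ), _root_.map_one, map_zero]
    ring
  rw [Finset.sum_congr rfl fun k _ => hstep k]
  rw [Fintype.sum_prod_type]
  have hfact : ∀ k1 : M.σ ⊕ M.σ, ∑ k2 : Bool,
      ((if k1 = g M a i.1 then (1:ℂ) else 0) * (if k1 = g M a j.1 then 1 else 0))
        * (((rot c s k2 i.2 * rot c s k2 j.2 : ℝ)) : ℂ)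
      = ((if k1 = g M a i.1 then (1:ℂ) else 0) * (if k1 = g M a j.1 then 1 else 0))
        * (((if i.2 = j.2 then (1:ℝ) else 0)) : ℂ) := by
    intro k1
    rw [← Finset.mul_sum]
    congr 1
    rw [Fintype.sum_bool]
    have hC : (c:ℂ)^2 + (s:ℂ)^2 = 1 := by exact_mod_cast hcs
    cases hi : i.2 <;> cases hj : j.2 <;> simp [rot] <;> push_cast <;>
      first
      | linear_combination hC
      | ring
  rw [Finset.sum_congr rfl fun k1 _ => hfact k1]
  rw [← Finset.sum_mul]
  have hsum1 : ∑ k1 : M.σ ⊕ M.σ,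
      ((if k1 = g M a i.1 then (1:ℂ) else 0) * (if k1 = g M a j.1 then 1 else 0))
      = if i.1 = j.1 then 1 else 0 := by
    have : ∀ k1 : M.σ ⊕ M.σ,
        ((if k1 = g M a i.1 then (1:ℂ) else 0) * (if k1 = g M a j.1 then 1 else 0))
        = if k1 = g M a i.1 then (if k1 = g M a j.1 then (1:ℂ) else 0) else 0 := by
      intro k1; by_cases h : k1 = g M a i.1 <;> simp [h]
    rw [Finset.sum_congr rfl fun k1 _ => this k1,
      Finset.sum_ite_eq' Finset.univ (g M a i.1) (fun k1 => if k1 = g M a j.1 then (1:ℂ) else 0)]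
    simp only [Finset.mem_univ, if_true]
    by_cases h : i.1 = j.1
    · rw [if_pos (h ▸ rfl), if_pos h]
    · rw [if_neg (fun hg => h (g_inj M a hg)), if_neg h]
  rw [hsum1]
  rw [Matrix.one_apply]
  by_cases h1 : i.1 = j.1 <;> by_cases h2 : i.2 = j.2 <;>
    simp [h1, h2, Prod.ext_iff]

/-- The evolving state of the simulation. -/
noncomputable def run (w : List V) : B M → ℂ :=
  w.foldl (fun v a => (Umat M c s a * Nmat M) *ᵥ v) (vec M (Sum.inl M.start) 1 0)

/-- The amplitude on the accepting copy after `n` steps. -/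
noncomputable def beta (n : ℕ) : ℂ := if n = 0 then 0 else (c : ℂ) ^ (n - 1) * (s : ℂ)

lemma eval_append (w : List V) (a : V) :
    M.eval (w ++ [a]) = (M.eval w).bind fun t => M.step t a := by
  unfold RevPartialDFA.eval
  rw [List.foldl_append]
  rfl

lemma run_append (w : List V) (a : V) :
    run M c s (w ++ [a]) = (Umat M c s a * Nmat M) *ᵥ run M c s w := by
  unfold run
  rw [List.foldl_append]
  rfl

lemma run_spec (w : List V) :
    (∀ t, M.eval w = some t →
        run M c s w = vec M (Sum.inl t) ((c : ℂ) ^ w.length) (beta c s w.length)) ∧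
    (M.eval w = none → Amat M *ᵥ run M c s w = 0 ∧ Nmat M *ᵥ run M c s w = 0) := by
  induction w using List.reverseRecOn with
  | nil =>
    constructor
    · intro t ht
      have hts : M.start = t := Option.some.inj ht
      subst hts
      unfold run beta vec
      simp
    · intro h
      exact absurd h (by simp [RevPartialDFA.eval])
  | append_singleton w a ih =>
    have hlen : (w ++ [a]).length = w.length + 1 := by simp
    constructor
    · intro t ht
      rw [eval_append] at ht
      rcases hw : M.eval w with _ | u
      · rw [hw] at ht; exact absurd ht (by simp)
      · rw [hw] at ht
        simp only [Option.bind_some] at ht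
        have hr := ih.1 u hw
        rw [run_append, hr, ← Matrix.mulVec_mulVec, Nmat_mulVec_inl, Umat_mulVec]
        have hg : g M a (Sum.inl u) = Sum.inl t := by
          rw [g_inl, ht]; rfl
        have hb : beta c s (w ++ [a]).length = (s : ℂ) * (c : ℂ) ^ w.length := by
          unfold beta
          rw [hlen, if_neg (Nat.succ_ne_zero _), Nat.add_sub_cancel]
          ring
        have ha : (c : ℂ) ^ (w ++ [a]).length = (c : ℂ) * (c : ℂ) ^ w.length := by
          rw [hlen, pow_succ]; ring
        rw [hg, hb, ha]
    · intro ht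
      rw [eval_append] at ht
      rcases hw : M.eval w with _ | u
      · have h2 := (ih.2 hw).2
        rw [run_append, ← Matrix.mulVec_mulVec, h2, Matrix.mulVec_zero]
        exact ⟨Matrix.mulVec_zero _, Matrix.mulVec_zero _⟩
      · rw [hw] at ht
        simp only [Option.bind_some] at ht
        have hr := ih.1 u hw
        rw [run_append, hr, ← Matrix.mulVec_mulVec, Nmat_mulVec_inl, Umat_mulVec]
        have hg : g M a (Sum.inl u) = Sum.inr u := by
          rw [g_inl, ht]; rfl
        rw [hg]
        exact ⟨Amat_mulVec_inr M _ _ _, Nmat_mulVec_inr M _ _ _⟩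

lemma run_prob (w : List V) :
    ∑ b, Complex.normSq ((Amat M *ᵥ run M c s w) b)
      = if w ∈ M.accepts then Complex.normSq (beta c s w.length) else 0 := by
  rcases hw : M.eval w with _ | t
  · rw [(run_spec M c s w).2 hw |>.1]
    rw [if_neg (by rintro ⟨u, hu, he⟩; rw [hw] at he; exact nomatch he)]
    simp
  · rw [(run_spec M c s w).1 t hw]
    by_cases ht : t ∈ M.accept
    · rw [Amat_mulVec_inl_acc M t ht, if_pos ⟨t, ht, hw⟩, vec_nsq]
      simp
    · rw [Amat_mulVec_inl_nonacc M t ht]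
      rw [if_neg (by rintro ⟨u, hu, he⟩; rw [hw] at he; exact ht (Option.some.inj he ▸ hu))]
      simp

lemma acceptZero_of_not_mem (w : List V) (hw : w ∉ M.accepts) :
    Amat M *ᵥ run M c s w = 0 := by
  rcases he : M.eval w with _ | t
  · exact ((run_spec M c s w).2 he).1
  · rw [(run_spec M c s w).1 t he]
    refine Amat_mulVec_inl_nonacc M t (fun ht => hw ⟨t, ht, he⟩) _ _

end RevSim
namespace RevSim
open Matrix
attribute [local instance] RevPartialDFA.fintype
attribute [local instance] Classical.propDecidable
variable {V : Type*} (M : RevPartialDFA V) (c s : ℝ)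

lemma Amat_idem : Amat M * Amat M = Amat M := by
  unfold Amat
  rw [Matrix.diagonal_mul_diagonal]
  apply congrArg Matrix.diagonal
  funext b
  by_cases h : accP M b <;> simp [h]

lemma Amat_herm : (Amat M).IsHermitian := by
  unfold Matrix.IsHermitian Amat
  rw [Matrix.diagonal_conjTranspose]
  apply congrArg Matrix.diagonal
  funext b
  by_cases h : accP M b <;> simp [h, Pi.star_apply]

lemma Rmat_idem : Rmat M * Rmat M = Rmat M := by
  unfold Rmat
  rw [Matrix.diagonal_mul_diagonal]
  apply congrArg Matrix.diagonal
  funext b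
  by_cases h : accP M b ∨ nhP M b <;> simp [h]

lemma Rmat_herm : (Rmat M).IsHermitian := by
  unfold Matrix.IsHermitian Rmat
  rw [Matrix.diagonal_conjTranspose]
  apply congrArg Matrix.diagonal
  funext b
  by_cases h : accP M b ∨ nhP M b <;> simp [h, Pi.star_apply]

lemma AmatRmat : Amat M * Rmat M = 0 := by
  unfold Amat Rmat
  rw [Matrix.diagonal_mul_diagonal]
  rw [show (0 : Matrix (B M) (B M) ℂ) = Matrix.diagonal (fun _ => 0) by simp]
  apply congrArg Matrix.diagonal
  funext b
  by_cases h : accP M b <;> simp [h]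

/-- The identification of the basis with `Fin d`. -/
noncomputable def eB : B M ≃ Fin (Fintype.card (B M)) := Fintype.equivFin (B M)

/-- The simulating Kondacs–Watrous QFA. -/
noncomputable def build (hcs : c ^ 2 + s ^ 2 = 1) : KWQFA V where
  d := Fintype.card (B M)
  U := fun a => (Umat M c s a).submatrix (eB M).symm (eB M).symm
  unitary := fun a => by
    rw [Matrix.mem_unitaryGroup_iff']
    rw [Matrix.star_eq_conjTranspose, Matrix.conjTranspose_submatrix,
      Matrix.submatrix_mul_equiv ((Umat M c s a)ᴴ) (Umat M c s a) _ (eB M).symm _]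
    rw [← Matrix.star_eq_conjTranspose, Matrix.mem_unitaryGroup_iff'.mp (Umat_unitary M c s hcs a)]
    exact Matrix.submatrix_one_equiv (eB M).symm
  init := vec M (Sum.inl M.start) 1 0 ∘ (eB M).symm
  init_norm := by
    simp only [Function.comp_apply]
    rw [Equiv.sum_comp (eB M).symm (fun b => Complex.normSq (vec M (Sum.inl M.start) 1 0 b))]
    rw [vec_nsq]
    simp
  A := (Amat M).submatrix (eB M).symm (eB M).symm
  R := (Rmat M).submatrix (eB M).symm (eB M).symm
  A_idem := by
    rw [Matrix.submatrix_mul_equiv (Amat M) (Amat M) _ (eB M).symm _, Amat_idem]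
  A_herm := by
    unfold Matrix.IsHermitian
    rw [Matrix.conjTranspose_submatrix, (Amat_herm M).eq]
  R_idem := by
    rw [Matrix.submatrix_mul_equiv (Rmat M) (Rmat M) _ (eB M).symm _, Rmat_idem]
  R_herm := by
    unfold Matrix.IsHermitian
    rw [Matrix.conjTranspose_submatrix, (Rmat_herm M).eq]
  AR := by
    rw [Matrix.submatrix_mul_equiv (Amat M) (Rmat M) _ (eB M).symm _, AmatRmat]
    simp

variable (hcs : c ^ 2 + s ^ 2 = 1)

lemma build_N : (build M c s hcs).N = (Nmat M).submatrix (eB M).symm (eB M).symm := by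
  unfold KWQFA.N
  show (1 : Matrix (Fin (Fintype.card (B M))) (Fin (Fintype.card (B M))) ℂ)
      - (Amat M).submatrix (eB M).symm (eB M).symm
      - (Rmat M).submatrix (eB M).symm (eB M).symm = _
  rw [← N_eq]
  have : ((1 : Matrix (B M) (B M) ℂ) - Amat M - Rmat M).submatrix (eB M).symm (eB M).symm
      = (1 : Matrix (B M) (B M) ℂ).submatrix (eB M).symm (eB M).symm
        - (Amat M).submatrix (eB M).symm (eB M).symm
        - (Rmat M).submatrix (eB M).symm (eB M).symm := rfl
  rw [this, Matrix.submatrix_one_equiv]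

lemma build_fold (w : List V) :
    w.foldl (fun v a => ((build M c s hcs).U a * (build M c s hcs).N) *ᵥ v)
        (build M c s hcs).init
      = run M c s w ∘ (eB M).symm := by
  have step : ∀ (a : V) (v : B M → ℂ),
      (((build M c s hcs).U a * (build M c s hcs).N) *ᵥ (v ∘ (eB M).symm))
        = ((Umat M c s a * Nmat M) *ᵥ v) ∘ (eB M).symm := by
    intro a v
    rw [build_N]
    show ((Umat M c s a).submatrix (eB M).symm (eB M).symm
        * (Nmat M).submatrix (eB M).symm (eB M).symm) *ᵥ (v ∘ (eB M).symm) = _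
    rw [Matrix.submatrix_mul_equiv (Umat M c s a) (Nmat M) _ (eB M).symm _]
    rw [Matrix.submatrix_mulVec_equiv]
    congr 1
    congr 1
    rw [Function.comp_assoc, Equiv.self_comp_symm, Function.comp_id]
  have gen : ∀ (w : List V) (v : B M → ℂ),
      w.foldl (fun v a => ((build M c s hcs).U a * (build M c s hcs).N) *ᵥ v) (v ∘ (eB M).symm)
        = (w.foldl (fun v a => (Umat M c s a * Nmat M) *ᵥ v) v) ∘ (eB M).symm := by
    intro w
    induction w with
    | nil => intro v; rfl
    | cons a w ih =>
        intro v
        simp only [List.foldl_cons]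
        rw [step a v]
        exact ih _
  exact gen w (vec M (Sum.inl M.start) 1 0)

lemma build_acceptVec (w : List V) :
    (build M c s hcs).acceptVec w = (Amat M *ᵥ run M c s w) ∘ (eB M).symm := by
  unfold KWQFA.acceptVec
  rw [build_fold]
  show (Amat M).submatrix (eB M).symm (eB M).symm *ᵥ (run M c s w ∘ (eB M).symm) = _
  rw [Matrix.submatrix_mulVec_equiv]
  congr 1
  congr 1
  rw [Function.comp_assoc, Equiv.self_comp_symm, Function.comp_id]

lemma build_prob (w : List V) :
    ∑ i, Complex.normSq ((build M c s hcs).acceptVec w i)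
      = if w ∈ M.accepts then Complex.normSq (beta c s w.length) else 0 := by
  rw [← run_prob M c s w]
  rw [show ∑ i, Complex.normSq ((build M c s hcs).acceptVec w i)
      = ∑ i, Complex.normSq (((Amat M *ᵥ run M c s w) ∘ (eB M).symm) i) by
    refine Finset.sum_congr rfl fun i _ => ?_
    rw [build_acceptVec]]
  exact Equiv.sum_comp (eB M).symm (fun b => Complex.normSq ((Amat M *ᵥ run M c s w) b))

lemma build_accepts_subset : (build M c s hcs).accepts ⊆ M.accepts := by
  intro w hw
  by_contra hmem
  apply hw
  rw [KWQFA.accepts] at *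
  show (build M c s hcs).acceptVec w = 0
  rw [build_acceptVec, acceptZero_of_not_mem M c s w hmem]
  rfl

end RevSim
namespace RevSim
open Matrix
attribute [local instance] RevPartialDFA.fintype
attribute [local instance] Classical.propDecidable
variable {V : Type*} [Fintype V] (M : RevPartialDFA V) (c s : ℝ) (hcs : c ^ 2 + s ^ 2 = 1)

lemma ncard_eq_cnt (L : Set (List V)) (n : ℕ) :
    Set.ncard {w ∈ L | w.length = n}
      = (Finset.univ.filter fun f : Fin n → V => List.ofFn f ∈ L).card := by
  have himg : {w ∈ L | w.length = n}
      = ↑((Finset.univ.filter fun f : Fin n → V => List.ofFn f ∈ L).image List.ofFn) := by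
    ext w
    simp only [Finset.coe_image, Set.mem_image, Finset.mem_coe, Finset.mem_filter,
      Finset.mem_univ, true_and, Set.mem_setOf_eq]
    constructor
    · rintro ⟨hw, hlen⟩
      subst hlen
      exact ⟨w.get, by rw [List.ofFn_get]; exact hw, List.ofFn_get w⟩
    · rintro ⟨f, hf, rfl⟩
      exact ⟨hf, List.length_ofFn⟩
  rw [himg, Set.ncard_coe_finset, Finset.card_image_of_injective _ List.ofFn_injective]

lemma build_term (n : ℕ) :
    (∑ w : Fin n → V, ∑ i, Complex.normSq ((build M c s hcs).acceptVec (List.ofFn w) i))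
      = ((Finset.univ.filter fun f : Fin n → V => List.ofFn f ∈ M.accepts).card : ℝ)
        * Complex.normSq (beta c s n) := by
  have hlen : ∀ w : Fin n → V,
      (∑ i, Complex.normSq ((build M c s hcs).acceptVec (List.ofFn w) i))
        = if List.ofFn w ∈ M.accepts then Complex.normSq (beta c s n) else 0 := by
    intro w
    rw [build_prob, List.length_ofFn]
  rw [Finset.sum_congr rfl fun w _ => hlen w, ← Finset.sum_filter, Finset.sum_const,
    nsmul_eq_mul]

end RevSim
/-- the unitary capacity is at least the reversible capacity. -/
theorem revCapacity_le_unitaryCapacity {V : Type*} [Fintype V] (G : SimpleGraph V) :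
    revCapacity G ≤ unitaryCapacity G := by
  classical
  apply Real.sSup_le _ (unitaryCapacity_nonneg G)
  rintro r ⟨M, hdist, rfl⟩
  set L := M.accepts with hL
  set a : ℕ → ℝ :=
    fun n => ((Set.ncard {w ∈ L | w.length = n} : ℕ) : ℝ) ^ (1 / (n : ℝ)) with hadef
  have hgr : growthRate L = Filter.limsup a Filter.atTop := rfl
  have ha_nonneg : ∀ n, 0 ≤ a n := fun n => Real.rpow_nonneg (Nat.cast_nonneg _) _
  rcases le_or_gt (growthRate L) 0 with h0 | h0
  · exact le_trans h0 (unitaryCapacity_nonneg G)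
  refine le_of_forall_pos_le_add fun ε hε => ?_
  rcases le_or_gt (growthRate L) ε with hre | hre
  · exact le_trans hre (le_add_of_nonneg_left (unitaryCapacity_nonneg G))
  -- parameters
  set δ := min (1/2 : ℝ) (ε / (4 * growthRate L)) with hδdef
  have hδpos : 0 < δ := lt_min (by norm_num) (by positivity)
  have hδhalf : δ ≤ 1/2 := min_le_left _ _
  have hδr : δ ≤ ε / (4 * growthRate L) := min_le_right _ _
  have h4 : δ * (4 * growthRate L) ≤ ε := (le_div_iff₀ (by positivity)).mp hδr
  have h1δ : (0:ℝ) ≤ 1 - δ := by linarith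
  set c := Real.sqrt (1 - δ) with hcdef
  set s := Real.sqrt δ with hsdef
  have hc2 : c ^ 2 = 1 - δ := Real.sq_sqrt h1δ
  have hs2 : s ^ 2 = δ := Real.sq_sqrt hδpos.le
  have hcs : c ^ 2 + s ^ 2 = 1 := by rw [hc2, hs2]; ring
  have hcpos : 0 < c := Real.sqrt_pos.mpr (by linarith)
  have hspos : 0 < s := Real.sqrt_pos.mpr hδpos
  set Q := RevSim.build M c s hcs with hQdef
  have hQmem : Q.capacity ∈
      {r : ℝ | ∃ N : KWQFA V, Distinguishable G N.accepts ∧ N.capacity = r} :=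
    ⟨Q, distinguishable_mono (RevSim.build_accepts_subset M c s hcs) hdist, rfl⟩
  have hQle : Q.capacity ≤ unitaryCapacity G := le_csSup (bddAbove_unitarySet G) hQmem
  have main : growthRate L - ε ≤ Q.capacity := by
    set K := s ^ 2 / c ^ 2 with hKdef
    have hKpos : 0 < K := by positivity
    have hK1 : K ≤ 1 := by
      rw [hKdef, hs2, hc2, div_le_one (by linarith)]
      linarith
    -- frequently a n is close to the limsup
    have hcob : Filter.IsCoboundedUnder (· ≤ ·) Filter.atTop a :=
      Filter.isCoboundedUnder_le_of_le Filter.atTop (x := 0) ha_nonneg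
    have hfreq : ∃ᶠ n in Filter.atTop, growthRate L - ε/2 < a n := by
      apply Filter.frequently_lt_of_lt_limsup hcob
      rw [← hgr]; linarith
    -- eventually K ^ (1/n) is close to 1
    have hKtend : Filter.Tendsto (fun n : ℕ => K ^ (1/(n:ℝ))) Filter.atTop (nhds 1) := by
      have h0 : Filter.Tendsto (fun n : ℕ => 1/(n:ℝ)) Filter.atTop (nhds 0) :=
        tendsto_one_div_atTop_nhds_zero_nat
      have hcont : ContinuousAt (fun x : ℝ => K ^ x) 0 :=
        Real.continuousAt_const_rpow (ne_of_gt hKpos)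
      have := hcont.tendsto.comp h0
      simpa [Real.rpow_zero, Function.comp_def] using this
    have hevK : ∀ᶠ n : ℕ in Filter.atTop, 1 - δ ≤ K ^ (1/(n:ℝ)) :=
      hKtend.eventually (eventually_ge_nhds (by linarith : (1:ℝ) - δ < 1))
    have hev1 : ∀ᶠ n : ℕ in Filter.atTop, 1 ≤ n := Filter.eventually_ge_atTop 1
    show growthRate L - ε ≤ KWQFA.capacity Q
    unfold KWQFA.capacity
    apply Filter.le_limsup_of_frequently_le
    · refine ((hfreq.and_eventually (hevK.and hev1)).mono ?_)
      rintro n ⟨han, hKn, hn1⟩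
      -- rewrite the term
      have hne : n ≠ 0 := by omega
      obtain ⟨m, rfl⟩ : ∃ m, n = m + 1 := ⟨n - 1, by omega⟩
      have hbeta : Complex.normSq (RevSim.beta c s (m+1)) = (c^2)^(m+1) * K := by
        unfold RevSim.beta
        rw [if_neg (by omega)]
        have hco : ((c:ℂ)^(m+1-1) * (s:ℂ)) = (((c^m * s : ℝ)):ℂ) := by
          push_cast; ring_nf
        rw [hco, Complex.normSq_ofReal, hKdef]
        field_simp
        ring
      have hTn : (∑ w : Fin (m+1) → V, ∑ i,
            Complex.normSq (Q.acceptVec (List.ofFn w) i)) ^ (1/((m+1:ℕ):ℝ))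
          = a (m+1) * (c^2) * K ^ (1/((m+1:ℕ):ℝ)) := by
        rw [hQdef, RevSim.build_term, ← Nat.cast_inj (R := ℝ) |>.mpr
          (RevSim.ncard_eq_cnt (V := V) L (m+1)), hbeta]
        rw [Real.mul_rpow (Nat.cast_nonneg _) (by positivity),
          Real.mul_rpow (by positivity) hKpos.le]
        have hpow : (((c^2)^(m+1) : ℝ)) ^ (1/((m+1:ℕ):ℝ)) = c^2 := by
          rw [← Real.rpow_natCast (c^2) (m+1), ← Real.rpow_mul (by positivity), mul_one_div,
            div_self (by exact_mod_cast (Nat.succ_ne_zero m)), Real.rpow_one]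
        rw [hpow]
        show _ = (((Set.ncard {w ∈ L | w.length = (m+1)} : ℕ) : ℝ) ^ (1 / ((m+1:ℕ):ℝ))) * (c^2) * K ^ (1/((m+1:ℕ):ℝ))
        ring
      rw [hTn]
      have hstep1 : growthRate L - ε ≤ (growthRate L - ε/2) * ((1 - δ) * (1 - δ)) := by
        nlinarith [hδpos, hδhalf, hre, hε, h4, h0, sq_nonneg δ]
      refine le_trans hstep1 ?_
      have h1 : (0:ℝ) ≤ growthRate L - ε/2 := by linarith
      calc (growthRate L - ε/2) * ((1 - δ) * (1 - δ))
          ≤ a (m+1) * ((1 - δ) * (1 - δ)) := by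
            apply mul_le_mul_of_nonneg_right han.le (by nlinarith)
        _ ≤ a (m+1) * ((1 - δ) * (K ^ (1/((m+1:ℕ):ℝ)))) := by
            apply mul_le_mul_of_nonneg_left ?_ (ha_nonneg _)
            exact mul_le_mul_of_nonneg_left hKn (by linarith)
        _ = a (m+1) * (c^2) * K ^ (1/((m+1:ℕ):ℝ)) := by rw [hc2]; ring
    · exact Filter.isBoundedUnder_of
        ⟨max 1 (Fintype.card V : ℝ), fun n => Q.term_le n⟩
  linarith [main, hQle]
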